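/- Combining the variance bound with averaging and the singular-value bound: if u₁,…,u_m are i.i.d. unit vectors in R^K with E[uᵣuᵣᵀ] = (1/K)I, g = Θᵀ v for Θ ∈ R^{P×K} and v ∈ R^P, and ḡ = (1/m)Σᵣ(gᵀuᵣ)uᵣ, then E[‖ḡ − E[ḡ]‖²] ≤ ((K−1)/(mK))·σ_max(Θ)²·‖v‖². -/

import Mathlib

open MeasureTheory ProbabilityTheory RealInnerProductSpace

private lemma spsa_var_le_second_moment {Ω : Type*} [MeasurableSpace Ω] (μ : Measure Ω)
    [IsProbabilityMeasure μ] {E : Type*} [NormedAddCommGroup E] [InnerProductSpace ℝ E]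
    [CompleteSpace E]
    (f : Ω → E) (hf : Integrable f μ) (hf2 : Integrable (fun ω => ‖f ω‖ ^ 2) μ) :
    ∫ ω, ‖f ω - ∫ ω', f ω' ∂μ‖ ^ 2 ∂μ ≤ ∫ ω, ‖f ω‖ ^ 2 ∂μ := by
  set c := ∫ ω', f ω' ∂μ with hc
  have hint : Integrable (fun ω => ⟪c, f ω⟫) μ := hf.const_inner c
  have h1 : ∫ ω, ‖f ω - c‖ ^ 2 ∂μ
      = ∫ ω, (‖f ω‖ ^ 2 - 2 * ⟪c, f ω⟫ + ‖c‖ ^ 2) ∂μ := by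
    congr 1; funext ω; rw [norm_sub_sq_real, real_inner_comm]
  have hA : Integrable (fun ω => ‖f ω‖ ^ 2 - 2 * ⟪c, f ω⟫) μ := hf2.sub (hint.const_mul 2)
  have hB : Integrable (fun ω => 2 * ⟪c, f ω⟫) μ := hint.const_mul 2
  rw [h1, integral_add hA (integrable_const _),
    integral_sub hf2 hB, integral_const_mul, integral_inner hf c,
    ← hc, real_inner_self_eq_norm_sq, integral_const]
  simp only [measure_univ, ENNReal.toReal_one, probReal_univ, one_smul, smul_eq_mul]
  nlinarith [sq_nonneg ‖c‖]

private lemma spsa_abs_coord_le {K : ℕ} (x : EuclideanSpace ℝ (Fin K)) (i : Fin K) :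
    |x i| ≤ ‖x‖ := by
  rw [EuclideanSpace.norm_eq, ← Real.sqrt_sq_eq_abs]
  apply Real.sqrt_le_sqrt
  calc x i ^ 2 = ‖x i‖ ^ 2 := by simp [Real.norm_eq_abs, sq_abs]
    _ ≤ _ := Finset.single_le_sum (f := fun j => ‖x j‖ ^ 2) (fun j _ => sq_nonneg _)
        (Finset.mem_univ i)

set_option maxHeartbeats 1000000 in
/-- Main SPSA variance bound (Proposition 1, μ → 0 limit): with `g = Θᵀv` and
`ḡ = (1/m)Σᵣ(gᵀuᵣ)uᵣ` over i.i.d. isotropic unit directions `uᵣ`,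
`E[‖ḡ − E[ḡ]‖²] ≤ ((K−1)/(mK))·σ_max(Θ)²·‖v‖²`. -/
theorem spsa_variance_main_bound {K P m : ℕ} (hK : 0 < K) (hm : 0 < m) {Ω : Type*}
    [MeasurableSpace Ω] (μ : Measure Ω) [IsProbabilityMeasure μ]
    (u : Fin m → Ω → EuclideanSpace ℝ (Fin K))
    (hmeas : ∀ r, Measurable (u r))
    (hindep : iIndepFun u μ)
    (hident : ∀ r, Measure.map (u r) μ = Measure.map (u ⟨0, hm⟩) μ)
    (hunit : ∀ r, ∀ᵐ ω ∂μ, ‖u r ω‖ = 1)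
    (hiso : ∀ r (i j : Fin K), ∫ ω, u r ω i * u r ω j ∂μ = if i = j then (K : ℝ)⁻¹ else 0)
    (Θ : Matrix (Fin P) (Fin K) ℝ) (v : EuclideanSpace ℝ (Fin P))
    (g : EuclideanSpace ℝ (Fin K)) (hg : g = Matrix.toEuclideanLin Θ.transpose v) :
    ∫ ω, ‖(m : ℝ)⁻¹ • (∑ r, ⟪g, u r ω⟫ • u r ω) -
        ∫ ω', (m : ℝ)⁻¹ • (∑ r, ⟪g, u r ω'⟫ • u r ω') ∂μ‖ ^ 2 ∂μ
      ≤ ((K - 1 : ℝ) / (m * K)) *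
          ‖LinearMap.toContinuousLinearMap (Matrix.toEuclideanLin Θ)‖ ^ 2 * ‖v‖ ^ 2 := by
  classical
  have hK' : (0:ℝ) < K := by exact_mod_cast hK
  have hm' : (0:ℝ) < m := by exact_mod_cast hm
  set T := LinearMap.toContinuousLinearMap (Matrix.toEuclideanLin Θ) with hT
  set X : Fin m → Ω → EuclideanSpace ℝ (Fin K) := fun r ω => ⟪g, u r ω⟫ • u r ω with hXdef
  set c : EuclideanSpace ℝ (Fin K) := (K:ℝ)⁻¹ • g with hcdef
  set Z : Ω → EuclideanSpace ℝ (Fin K) := fun ω => (m:ℝ)⁻¹ • ∑ r, X r ω with hZdef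
  -- measurability
  have hmX : ∀ r, Measurable (X r) := by
    intro r
    have hcont : Continuous (fun x : EuclideanSpace ℝ (Fin K) => ⟪g, x⟫ • x) := by
      fun_prop
    exact hcont.measurable.comp (hmeas r)
  have hmui : ∀ r i, Measurable (fun ω => u r ω i) := fun r i =>
    ((EuclideanSpace.proj i).continuous.measurable).comp (hmeas r)
  have hma : ∀ r, Measurable (fun ω => ⟪g, u r ω⟫) := fun r =>
    ((continuous_const.inner continuous_id).measurable).comp (hmeas r)
  -- a.e. bounds
  have hXb : ∀ r, ∀ᵐ ω ∂μ, ‖X r ω‖ ≤ ‖g‖ := by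
    intro r
    filter_upwards [hunit r] with ω hω
    calc ‖X r ω‖ = |⟪g, u r ω⟫| * ‖u r ω‖ := by
          simp [hXdef, norm_smul, Real.norm_eq_abs]
      _ ≤ (‖g‖ * ‖u r ω‖) * ‖u r ω‖ := by
          gcongr; exact abs_real_inner_le_norm g (u r ω)
      _ = ‖g‖ := by rw [hω]; ring
  have hXint : ∀ r, Integrable (X r) μ := fun r =>
    Integrable.mono' (integrable_const ‖g‖) (hmX r).aestronglyMeasurable (hXb r)
  have hZint : Integrable Z μ :=
    (integrable_finset_sum _ (fun r _ => hXint r)).smul ((m:ℝ)⁻¹)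
  -- bounded real integrands helper
  have bddInt : ∀ {f : Ω → ℝ} (_ : Measurable f) {C : ℝ} (_ : ∀ᵐ ω ∂μ, |f ω| ≤ C),
      Integrable f μ := by
    intro f hf C hC
    exact Integrable.mono' (integrable_const C) hf.aestronglyMeasurable
      (by simpa [Real.norm_eq_abs] using hC)
  -- product of coordinates integrable
  have huuInt : ∀ r s i j, Integrable (fun ω => u r ω i * u s ω j) μ := by
    intro r s i j
    apply bddInt ((hmui r i).mul (hmui s j)) (C := 1)
    filter_upwards [hunit r, hunit s] with ω h1 h2
    calc |u r ω i * u s ω j| = |u r ω i| * |u s ω j| := abs_mul _ _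
      _ ≤ ‖u r ω‖ * ‖u s ω‖ :=
          mul_le_mul (spsa_abs_coord_le _ i) (spsa_abs_coord_le _ j) (abs_nonneg _)
            (norm_nonneg _)
      _ = 1 := by rw [h1, h2, one_mul]
  -- inner product expansion
  have hinner_expand : ∀ (x : EuclideanSpace ℝ (Fin K)), ⟪g, x⟫ = ∑ j, g j * x j := by
    intro x; simp [PiLp.inner_apply, RCLike.inner_apply, conj_trivial]
    exact Finset.sum_congr rfl fun _ _ => mul_comm _ _
  have hgnorm : ‖g‖ ^ 2 = ∑ i, g i ^ 2 := by
    rw [EuclideanSpace.norm_eq, Real.sq_sqrt (by positivity)]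
    simp [Real.norm_eq_abs, sq_abs]
  -- mean of coordinates of X r
  have hYmean : ∀ r i, ∫ ω, ⟪g, u r ω⟫ * u r ω i ∂μ = (K:ℝ)⁻¹ * g i := by
    intro r i
    have h1 : ∀ ω, ⟪g, u r ω⟫ * u r ω i = ∑ j, g j * (u r ω j * u r ω i) := by
      intro ω; rw [hinner_expand, Finset.sum_mul]; simp [mul_assoc]
    simp_rw [h1]
    rw [integral_finset_sum _ (fun j _ => (huuInt r r j i).const_mul (g j))]
    simp_rw [integral_const_mul, hiso r]
    simp [Finset.sum_ite_eq, mul_comm]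
  -- second moment of ⟪g, u r⟫
  have haInt2 : ∀ r, Integrable (fun ω => ⟪g, u r ω⟫ ^ 2) μ := by
    intro r
    apply bddInt ((hma r).pow_const 2) (C := ‖g‖ ^ 2)
    filter_upwards [hunit r] with ω hω
    calc |⟪g, u r ω⟫ ^ 2| = |⟪g, u r ω⟫| ^ 2 := by rw [abs_pow]
      _ ≤ (‖g‖ * ‖u r ω‖) ^ 2 := by
          gcongr; exact abs_real_inner_le_norm g (u r ω)
      _ = ‖g‖ ^ 2 := by rw [hω]; ring
  have hamean2 : ∀ r, ∫ ω, ⟪g, u r ω⟫ ^ 2 ∂μ = ‖g‖ ^ 2 * (K:ℝ)⁻¹ := by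
    intro r
    have h1 : ∀ ω, ⟪g, u r ω⟫ ^ 2
        = ∑ j, ∑ k, (g j * g k) * (u r ω j * u r ω k) := by
      intro ω
      rw [sq, hinner_expand, Finset.sum_mul_sum]
      refine Finset.sum_congr rfl fun j _ => Finset.sum_congr rfl fun k _ => by ring
    simp_rw [h1]
    rw [integral_finset_sum _ (fun j _ => integrable_finset_sum _
      (fun k _ => (huuInt r r j k).const_mul _))]
    have h2 : ∀ j, ∫ ω, ∑ k, (g j * g k) * (u r ω j * u r ω k) ∂μ
        = g j ^ 2 * (K:ℝ)⁻¹ := by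
      intro j
      rw [integral_finset_sum _ (fun k _ => (huuInt r r j k).const_mul _)]
      simp_rw [integral_const_mul, hiso r]
      simp [Finset.sum_ite_eq, sq]
    simp_rw [h2]
    rw [hgnorm, Finset.sum_mul]
  -- the deviations
  set D : Fin m → Ω → EuclideanSpace ℝ (Fin K) := fun r ω => X r ω - c with hDdef
  have hDb : ∀ r, ∀ᵐ ω ∂μ, ‖D r ω‖ ≤ ‖g‖ + ‖c‖ := by
    intro r
    filter_upwards [hXb r] with ω hω
    calc ‖D r ω‖ ≤ ‖X r ω‖ + ‖c‖ := norm_sub_le _ _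
      _ ≤ ‖g‖ + ‖c‖ := by gcongr
  have hmD : ∀ r, Measurable (D r) := fun r => (hmX r).sub measurable_const
  have hDDInt : ∀ r s, Integrable (fun ω => ⟪D r ω, D s ω⟫) μ := by
    intro r s
    apply bddInt ((hmD r).inner (hmD s)) (C := (‖g‖ + ‖c‖) * (‖g‖ + ‖c‖))
    filter_upwards [hDb r, hDb s] with ω h1 h2
    calc |⟪D r ω, D s ω⟫| ≤ ‖D r ω‖ * ‖D s ω‖ := abs_real_inner_le_norm _ _
      _ ≤ (‖g‖ + ‖c‖) * (‖g‖ + ‖c‖) :=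
          mul_le_mul h1 h2 (norm_nonneg _) (by positivity)
  -- diagonal covariance
  have hdiag : ∀ r, ∫ ω, ⟪D r ω, D r ω⟫ ∂μ = ‖g‖ ^ 2 * ((K:ℝ) - 1) / K ^ 2 := by
    intro r
    have hae : ∀ᵐ ω ∂μ, ⟪D r ω, D r ω⟫
        = (1 - 2 * (K:ℝ)⁻¹) * ⟪g, u r ω⟫ ^ 2 + (K:ℝ)⁻¹ ^ 2 * ‖g‖ ^ 2 := by
      filter_upwards [hunit r] with ω hω
      show ⟪X r ω - c, X r ω - c⟫ = _
      simp only [real_inner_sub_sub_self, hXdef, hcdef, real_inner_smul_left,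
        real_inner_smul_right]
      rw [real_inner_self_eq_norm_sq, real_inner_self_eq_norm_sq, hω,
        real_inner_comm (u r ω) g]
      ring
    rw [integral_congr_ae hae, integral_add ((haInt2 r).const_mul _) (integrable_const _),
      integral_const_mul, hamean2 r, integral_const]
    simp only [measure_univ, ENNReal.toReal_one, probReal_univ, one_smul, smul_eq_mul]
    field_simp
    ring
  -- off-diagonal covariance vanishes
  have hoff : ∀ r s, r ≠ s → ∫ ω, ⟪D r ω, D s ω⟫ ∂μ = 0 := by
    intro r s hrs
    set d : Fin m → Fin K → Ω → ℝ :=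
      fun r' i ω => ⟪g, u r' ω⟫ * u r' ω i - (K:ℝ)⁻¹ * g i with hddef
    have hcoord : ∀ r' ω (i : Fin K), D r' ω i = d r' i ω := by
      intro r' ω i
      simp [hDdef, hXdef, hcdef, hddef, PiLp.sub_apply, PiLp.smul_apply, smul_eq_mul]
    have hinner : ∀ ω, ⟪D r ω, D s ω⟫ = ∑ i, d r i ω * d s i ω := by
      intro ω
      rw [PiLp.inner_apply]
      refine Finset.sum_congr rfl fun i _ => ?_
      rw [RCLike.inner_apply, conj_trivial, hcoord r ω i, hcoord s ω i, mul_comm]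
    have hmd : ∀ r' i, Measurable (d r' i) := fun r' i =>
      ((hma r').mul (hmui r' i)).sub measurable_const
    have hYb : ∀ r' i, ∀ᵐ ω ∂μ, |⟪g, u r' ω⟫ * u r' ω i| ≤ ‖g‖ := by
      intro r' i
      filter_upwards [hunit r'] with ω hω
      rw [abs_mul]
      calc |⟪g, u r' ω⟫| * |u r' ω i| ≤ (‖g‖ * ‖u r' ω‖) * ‖u r' ω‖ :=
            mul_le_mul (abs_real_inner_le_norm _ _) (spsa_abs_coord_le _ i) (abs_nonneg _)
              (by positivity)
        _ = ‖g‖ := by rw [hω]; ring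
    have hYInt : ∀ r' i, Integrable (fun ω => ⟪g, u r' ω⟫ * u r' ω i) μ := fun r' i =>
      bddInt ((hma r').mul (hmui r' i)) (hYb r' i)
    have hdInt : ∀ r' i, Integrable (d r' i) μ := fun r' i =>
      (hYInt r' i).sub (integrable_const _)
    have hdb : ∀ r' i, ∀ᵐ ω ∂μ, |d r' i ω| ≤ ‖g‖ + (K:ℝ)⁻¹ * |g i| := by
      intro r' i
      filter_upwards [hYb r' i] with ω hω
      calc |d r' i ω| ≤ |⟪g, u r' ω⟫ * u r' ω i| + |(K:ℝ)⁻¹ * g i| := abs_sub _ _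
        _ ≤ ‖g‖ + (K:ℝ)⁻¹ * |g i| := by
            rw [abs_mul ((K:ℝ)⁻¹) (g i), abs_of_nonneg (by positivity : (0:ℝ) ≤ (K:ℝ)⁻¹)]
            gcongr
    have hdmean : ∀ r' i, ∫ ω, d r' i ω ∂μ = 0 := by
      intro r' i
      show ∫ ω, (⟪g, u r' ω⟫ * u r' ω i - (K:ℝ)⁻¹ * g i) ∂μ = 0
      rw [integral_sub (hYInt r' i) (integrable_const _), hYmean r' i, integral_const]
      simp [measure_univ]
    have hindep_d : ∀ i, IndepFun (d r i) (d s i) μ := by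
      intro i
      have hφ : Measurable (fun x : EuclideanSpace ℝ (Fin K) =>
          ⟪g, x⟫ * x i - (K:ℝ)⁻¹ * g i) :=
        (((continuous_const.inner continuous_id).mul
          (EuclideanSpace.proj i).continuous).sub continuous_const).measurable
      exact (hindep.indepFun hrs).comp hφ hφ
    have hprodzero : ∀ i : Fin K, ∫ ω, d r i ω * d s i ω ∂μ = 0 := by
      intro i
      have h := IndepFun.integral_mul_eq_mul_integral (hindep_d i) (hdInt r i).aestronglyMeasurable
        (hdInt s i).aestronglyMeasurable
      calc ∫ ω, d r i ω * d s i ω ∂μ = ∫ ω, (d r i * d s i) ω ∂μ := rfl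
        _ = (∫ ω, d r i ω ∂μ) * ∫ ω, d s i ω ∂μ := h
        _ = 0 := by rw [hdmean r i, hdmean s i, mul_zero]
    have hprodInt : ∀ i : Fin K, Integrable (fun ω => d r i ω * d s i ω) μ := by
      intro i
      apply bddInt ((hmd r i).mul (hmd s i))
        (C := (‖g‖ + (K:ℝ)⁻¹ * |g i|) * (‖g‖ + (K:ℝ)⁻¹ * |g i|))
      filter_upwards [hdb r i, hdb s i] with ω h1 h2
      rw [Pi.mul_apply, abs_mul]
      exact mul_le_mul h1 h2 (abs_nonneg _) (by positivity)
    simp_rw [hinner]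
    rw [integral_finset_sum _ (fun i _ => hprodInt i)]
    simp [hprodzero]
  -- assemble
  set V : ℝ := ‖g‖ ^ 2 * ((K:ℝ) - 1) / K ^ 2 with hVdef
  have hcov : ∀ r s, ∫ ω, ⟪D r ω, D s ω⟫ ∂μ = if r = s then V else 0 := by
    intro r s
    by_cases h : r = s
    · subst h; rw [if_pos rfl]; exact hdiag r
    · rw [if_neg h]; exact hoff r s h
  set Wf : Ω → EuclideanSpace ℝ (Fin K) := fun ω => Z ω - c with hWdef
  have hWint : Integrable Wf μ := hZint.sub (integrable_const c)
  have hmZ : Measurable Z :=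
    (Finset.measurable_sum Finset.univ (fun r _ => hmX r)).const_smul ((m:ℝ)⁻¹)
  have hZb : ∀ᵐ ω ∂μ, ‖Z ω‖ ≤ ‖g‖ := by
    filter_upwards [ae_all_iff.2 hXb] with ω hω
    have h1 : ‖∑ r, X r ω‖ ≤ (m:ℝ) * ‖g‖ := by
      refine (norm_sum_le _ _).trans ?_
      calc ∑ r : Fin m, ‖X r ω‖ ≤ ∑ _r : Fin m, ‖g‖ := Finset.sum_le_sum fun r _ => hω r
        _ = (m:ℝ) * ‖g‖ := by
            rw [Finset.sum_const, Finset.card_univ, Fintype.card_fin, nsmul_eq_mul]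
    have h2 : ‖Z ω‖ = (m:ℝ)⁻¹ * ‖∑ r, X r ω‖ := by
      rw [hZdef]
      simp [norm_smul, Real.norm_eq_abs, abs_of_nonneg (inv_pos.2 hm').le]
    rw [h2]
    calc (m:ℝ)⁻¹ * ‖∑ r, X r ω‖ ≤ (m:ℝ)⁻¹ * ((m:ℝ) * ‖g‖) := by
          exact mul_le_mul_of_nonneg_left h1 (by positivity)
      _ = ‖g‖ := by field_simp
  have hWb : ∀ᵐ ω ∂μ, ‖Wf ω‖ ≤ ‖g‖ + ‖c‖ := by
    filter_upwards [hZb] with ω hω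
    calc ‖Wf ω‖ ≤ ‖Z ω‖ + ‖c‖ := norm_sub_le _ _
      _ ≤ ‖g‖ + ‖c‖ := by gcongr
  have hW2int : Integrable (fun ω => ‖Wf ω‖ ^ 2) μ := by
    apply bddInt ((hmZ.sub measurable_const).norm.pow_const 2) (C := (‖g‖ + ‖c‖) ^ 2)
    filter_upwards [hWb] with ω hω
    rw [abs_of_nonneg (by positivity)]
    exact pow_le_pow_left₀ (norm_nonneg _) hω 2
  have key := spsa_var_le_second_moment μ Wf hWint hW2int
  -- identify the left-hand sides
  have hWc : ∫ ω', Wf ω' ∂μ = (∫ ω', Z ω' ∂μ) - c := by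
    rw [hWdef]
    rw [integral_sub hZint (integrable_const c), integral_const]
    simp [measure_univ]
  have hLHSeq : ∫ ω, ‖Wf ω - ∫ ω', Wf ω' ∂μ‖ ^ 2 ∂μ
      = ∫ ω, ‖Z ω - ∫ ω', Z ω' ∂μ‖ ^ 2 ∂μ := by
    congr 1; funext ω
    rw [hWc, hWdef]
    simp only
    rw [sub_sub_sub_cancel_right]
  -- compute ∫ ‖Wf‖²
  have hWeq : ∀ ω, Wf ω = (m:ℝ)⁻¹ • ∑ r, D r ω := by
    intro ω
    rw [hWdef, hDdef]
    simp only [hZdef]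
    rw [Finset.sum_sub_distrib, smul_sub, Finset.sum_const, Finset.card_univ,
      Fintype.card_fin, ← Nat.cast_smul_eq_nsmul ℝ, smul_smul,
      inv_mul_cancel₀ (ne_of_gt hm'), one_smul]
  have hnormW : ∀ ω, ‖Wf ω‖ ^ 2 = (m:ℝ)⁻¹ * ((m:ℝ)⁻¹ * ∑ r, ∑ s, ⟪D r ω, D s ω⟫) := by
    intro ω
    rw [← real_inner_self_eq_norm_sq, hWeq ω, real_inner_smul_left, real_inner_smul_right,
      sum_inner]
    simp_rw [inner_sum]
  have hWval : ∫ ω, ‖Wf ω‖ ^ 2 ∂μ = (m:ℝ)⁻¹ * V := by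
    simp_rw [hnormW]
    rw [integral_const_mul, integral_const_mul,
      integral_finset_sum _ (fun r _ => integrable_finset_sum _ (fun s _ => hDDInt r s))]
    have h1 : ∀ r : Fin m, ∫ ω, ∑ s, ⟪D r ω, D s ω⟫ ∂μ = V := by
      intro r
      rw [integral_finset_sum _ (fun s _ => hDDInt r s)]
      simp_rw [hcov r]
      simp [Finset.sum_ite_eq]
    simp_rw [h1]
    rw [Finset.sum_const, Finset.card_univ, Fintype.card_fin, nsmul_eq_mul]
    field_simp
  -- the operator norm bound
  have hadjT : Matrix.toEuclideanLin Θ.transpose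
      = LinearMap.adjoint (Matrix.toEuclideanLin Θ) := by
    rw [← Matrix.conjTranspose_eq_transpose_of_trivial,
      Matrix.toEuclideanLin_conjTranspose_eq_adjoint]
  have hg2 : ‖g‖ ^ 2 = ⟪v, Matrix.toEuclideanLin Θ g⟫ := by
    rw [← real_inner_self_eq_norm_sq]
    nth_rewrite 1 [hg]
    rw [hadjT, LinearMap.adjoint_inner_left]
  have hTg : Matrix.toEuclideanLin Θ g = T g := by
    rw [hT, LinearMap.coe_toContinuousLinearMap']
  have hgle : ‖g‖ ≤ ‖T‖ * ‖v‖ := by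
    rcases eq_or_lt_of_le (norm_nonneg g) with h0 | h0
    · rw [← h0]; positivity
    · have h1 : ‖g‖ ^ 2 ≤ ‖v‖ * (‖T‖ * ‖g‖) := by
        rw [hg2]
        calc ⟪v, Matrix.toEuclideanLin Θ g⟫ ≤ |⟪v, Matrix.toEuclideanLin Θ g⟫| :=
              le_abs_self _
          _ ≤ ‖v‖ * ‖Matrix.toEuclideanLin Θ g‖ := abs_real_inner_le_norm _ _
          _ ≤ ‖v‖ * (‖T‖ * ‖g‖) := by
              gcongr
              rw [hTg]
              exact T.le_opNorm g
      nlinarith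
  have hgsq : ‖g‖ ^ 2 ≤ ‖T‖ ^ 2 * ‖v‖ ^ 2 := by
    calc ‖g‖ ^ 2 ≤ (‖T‖ * ‖v‖) ^ 2 := pow_le_pow_left₀ (norm_nonneg g) hgle 2
      _ = ‖T‖ ^ 2 * ‖v‖ ^ 2 := by ring
  have hK1 : (1:ℝ) ≤ K := by exact_mod_cast hK
  -- final chain
  calc ∫ ω, ‖(m : ℝ)⁻¹ • (∑ r, ⟪g, u r ω⟫ • u r ω) -
        ∫ ω', (m : ℝ)⁻¹ • (∑ r, ⟪g, u r ω'⟫ • u r ω') ∂μ‖ ^ 2 ∂μ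
      = ∫ ω, ‖Wf ω - ∫ ω', Wf ω' ∂μ‖ ^ 2 ∂μ := (hLHSeq).symm
    _ ≤ ∫ ω, ‖Wf ω‖ ^ 2 ∂μ := key
    _ = (m:ℝ)⁻¹ * V := hWval
    _ = ((K:ℝ) - 1) / (m * K ^ 2) * ‖g‖ ^ 2 := by rw [hVdef]; field_simp
    _ ≤ ((K:ℝ) - 1) / (m * K) * (‖T‖ ^ 2 * ‖v‖ ^ 2) := by
        have hd : ((K:ℝ) - 1) / (m * K ^ 2) ≤ ((K:ℝ) - 1) / (m * K) := by
          rw [div_le_div_iff₀ (by positivity) (by positivity)]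
          nlinarith [mul_nonneg (mul_nonneg (sub_nonneg.2 hK1) hm'.le)
            (mul_nonneg hK'.le (sub_nonneg.2 hK1))]
        exact mul_le_mul hd hgsq (sq_nonneg _)
          (div_nonneg (by linarith) (by positivity))
    _ = ((K:ℝ) - 1) / (m * K) * ‖T‖ ^ 2 * ‖v‖ ^ 2 := by ring
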